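/- arXiv:1410.3207 — 2 statements merged into one kernel-verified Lean document; each statement's English description precedes it below -/
import Mathlib

section
/- Let hold: c({|X_t − y| ≤ ε}) ≤ exp(β/2)·ε^{2α}/t^α for all y, t > 0, ε > 0, and suppose |φ(x)| ≤ M·1_{{|x| ≤ N}} for a Borel function φ, where Ê[φ(X_t)] ≤ M·Ê[1_{{|X_t| ≤ N}}] and X_t has the same sublinear distribution as √t·X̄ for an ℝⁿ-valued random variable X̄ satisfying Ê[exp(−mβ|X̄|²/2)] ≤ (1+m)^{−α} for all m ≥ 0. Then Ê[|φ(X_t)|] → 0 as t → ∞. -/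
/-- If `|φ| ≤ M·1_{|x|≤N}`, `X_t` scales like `√t·X̄`, and
`Ê[exp(−mβ|X̄|²/2)] ≤ (1+m)^(−α)`, then `Ê[|φ(X_t)|] → 0` as `t → ∞`. -/
theorem stmt7 {Ω : Type*} (n : ℕ) (E : (Ω → ℝ) → ℝ)
    (α β M N : ℝ) (hα : 0 < α) (hβ : 0 < β) (hM : 0 < M) (hN : 0 < N)
    (X : ℝ → Ω → EuclideanSpace ℝ (Fin n)) (Xb : Ω → EuclideanSpace ℝ (Fin n))
    (φ : EuclideanSpace ℝ (Fin n) → ℝ)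
    (hE_mono : ∀ f g : Ω → ℝ, (∀ ω, f ω ≤ g ω) → E f ≤ E g)
    (hE_nonneg : ∀ f : Ω → ℝ, (∀ ω, 0 ≤ f ω) → 0 ≤ E f)
    (hE_hom : ∀ (k : ℝ) (f : Ω → ℝ), 0 ≤ k → E (fun ω => k * f ω) = k * E f)
    -- `|φ(X_t)| ≤ M·1_{|X_t|≤N}` together with identical sublinear distribution
    -- of `X_t` and `√t·X̄`
    (hineq : ∀ t > (0 : ℝ), E (fun ω => |φ (X t ω)|)
        ≤ M * E ({ω | ‖Xb ω‖ ≤ N / Real.sqrt t}.indicator (fun _ => (1 : ℝ))))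
    (hXb : ∀ m : ℝ, 0 ≤ m →
      E (fun ω => Real.exp (-(m * β * ‖Xb ω‖ ^ 2) / 2)) ≤ (1 + m) ^ (-α)) :
    Filter.Tendsto (fun t => E (fun ω => |φ (X t ω)|)) Filter.atTop (nhds 0) := by
  have key : ∀ m ≥ (0:ℝ), ∀ t > (0:ℝ),
      E (fun ω => |φ (X t ω)|)
        ≤ M * (Real.exp (m*β*N^2/(2*t)) * (1+m)^(-α)) := by
    intro m hm t ht
    refine le_trans (hineq t ht) ?_
    have hk : (0:ℝ) ≤ Real.exp (m*β*N^2/(2*t)) := (Real.exp_pos _).le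
    have h1 : E ({ω | ‖Xb ω‖ ≤ N / Real.sqrt t}.indicator fun _ => (1:ℝ))
        ≤ E (fun ω => Real.exp (m*β*N^2/(2*t))
              * Real.exp (-(m * β * ‖Xb ω‖ ^ 2) / 2)) := by
      apply hE_mono
      intro ω
      by_cases h : ω ∈ {ω | ‖Xb ω‖ ≤ N / Real.sqrt t}
      · rw [Set.indicator_of_mem h]
        rw [← Real.exp_add]
        have hh : ‖Xb ω‖ ≤ N / Real.sqrt t := h
        have h2 : m * β * ‖Xb ω‖ ^ 2 / 2 ≤ m*β*N^2/(2*t) := by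
          have hb : ‖Xb ω‖ ^ 2 ≤ (N / Real.sqrt t)^2 :=
            pow_le_pow_left₀ (norm_nonneg _) hh 2
          have hsq : (N / Real.sqrt t)^2 = N^2 / t := by
            rw [div_pow, Real.sq_sqrt ht.le]
          rw [hsq] at hb
          have hmb : 0 ≤ m * β := mul_nonneg hm hβ.le
          rw [div_le_div_iff₀ two_pos (by positivity)]
          calc m * β * ‖Xb ω‖ ^ 2 * (2*t) = (m*β) * (‖Xb ω‖^2 * t) * 2 := by ring
            _ ≤ (m*β) * N^2 * 2 := by
                have : ‖Xb ω‖^2 * t ≤ N^2 := by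
                  rw [le_div_iff₀ ht] at hb; linarith
                nlinarith
            _ = m*β*N^2 * 2 := by ring
        calc (1:ℝ) = Real.exp 0 := Real.exp_zero.symm
          _ ≤ _ := Real.exp_le_exp.mpr (by linarith)
      · rw [Set.indicator_of_notMem h]
        positivity
    have h2 := hXb m hm
    calc M * E ({ω | ‖Xb ω‖ ≤ N / Real.sqrt t}.indicator fun _ => (1:ℝ))
        ≤ M * E (fun ω => Real.exp (m*β*N^2/(2*t))
              * Real.exp (-(m * β * ‖Xb ω‖ ^ 2) / 2)) :=
          mul_le_mul_of_nonneg_left h1 hM.le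
      _ = M * (Real.exp (m*β*N^2/(2*t))
              * E (fun ω => Real.exp (-(m * β * ‖Xb ω‖ ^ 2) / 2))) := by
          rw [hE_hom _ _ hk]
      _ ≤ M * (Real.exp (m*β*N^2/(2*t)) * (1+m)^(-α)) := by
          have hnn : 0 ≤ E (fun ω => Real.exp (-(m * β * ‖Xb ω‖ ^ 2) / 2)) :=
            hE_nonneg _ fun ω => (Real.exp_pos _).le
          gcongr
  rw [Metric.tendsto_atTop]
  intro ε hε
  have hlim : Filter.Tendsto (fun m:ℝ => M * (1+m)^(-α)) Filter.atTop (nhds 0) := by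
    have h1 : Filter.Tendsto (fun m:ℝ => (1+m)) Filter.atTop Filter.atTop :=
      Filter.tendsto_atTop_add_const_left _ _ Filter.tendsto_id
    have h2 := (tendsto_rpow_neg_atTop hα).comp h1
    have h3 := h2.const_mul M
    simpa using h3
  have hev := (hlim.eventually (gt_mem_nhds (by linarith : (0:ℝ) < ε/2))).and
    (Filter.eventually_ge_atTop (0:ℝ))
  obtain ⟨m, hm1, hm0⟩ := hev.exists
  refine ⟨max 1 (m*β*N^2/(2*Real.log 2)), fun t ht => ?_⟩
  have ht1 : (1:ℝ) ≤ t := le_trans (le_max_left _ _) ht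
  have ht0 : (0:ℝ) < t := lt_of_lt_of_le one_pos ht1
  have hb := key m hm0 t ht0
  have hlog : 0 < Real.log 2 := Real.log_pos one_lt_two
  have hexp : Real.exp (m*β*N^2/(2*t)) ≤ 2 := by
    have hle : m*β*N^2/(2*t) ≤ Real.log 2 := by
      have ht2 : m*β*N^2/(2*Real.log 2) ≤ t := le_trans (le_max_right _ _) ht
      rw [div_le_iff₀ (by positivity)]
      rw [div_le_iff₀ (by positivity)] at ht2
      nlinarith
    calc Real.exp _ ≤ Real.exp (Real.log 2) := Real.exp_le_exp.mpr hle
      _ = 2 := Real.exp_log two_pos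
  have hEnn : 0 ≤ E (fun ω => |φ (X t ω)|) := hE_nonneg _ fun ω => abs_nonneg _
  rw [Real.dist_eq, sub_zero, abs_of_nonneg hEnn]
  have hr : (0:ℝ) ≤ (1+m)^(-α) := Real.rpow_nonneg (by linarith) _
  calc E (fun ω => |φ (X t ω)|)
      ≤ M * (Real.exp (m*β*N^2/(2*t)) * (1+m)^(-α)) := hb
    _ ≤ M * (2 * (1+m)^(-α)) := by gcongr
    _ = 2 * (M * (1+m)^(-α)) := by ring
    _ < 2 * (ε/2) := by linarith
    _ = ε := by ring
end

section
/- Let c be a capacity represented by a weakly compact family 𝒫 of probability measures (so c(F_k) ↓ c(F) for closed sets F_k ↓ F). Let ξ : Ω → ℝᵏ be quasi-continuous and A ∈ B(ℝᵏ) with c({ξ ∈ ∂A}) = 0. Then the indicator 1_{{ξ ∈ A}} is quasi-continuous, i.e., for every ε > 0 there is an open set O ⊆ Ω with c(O) < ε such that 1_{{ξ ∈ A}} restricted to O^c is continuous. -/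
open Set Metric Filter Topology

lemma clopen_indicator {X : Type*} [TopologicalSpace X] {s : Set X} (h : IsClopen s) :
    Continuous (s.indicator (fun _ => (1 : ℝ))) := by
  classical
  have heq : s.indicator (fun _ => (1:ℝ)) = s.piecewise (fun _ => (1:ℝ)) (fun _ => 0) := by
    funext x; by_cases hx : x ∈ s <;> simp [Set.indicator, Set.piecewise, hx]
  rw [heq]
  refine Continuous.piecewise ?_ continuous_const continuous_const
  intro a ha
  rw [h.frontier_eq] at ha
  exact absurd ha (Set.notMem_empty a)

lemma key_restrict {Ω E : Type*} [TopologicalSpace Ω] [TopologicalSpace E]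
    (ξ : Ω → E) (A : Set E) (O : Set Ω)
    (hcont : Continuous (Oᶜ.restrict ξ))
    (hfr : ∀ ω ∈ Oᶜ, ξ ω ∉ frontier A) :
    Continuous (Oᶜ.restrict ({ω | ξ ω ∈ A}.indicator (fun _ => (1 : ℝ)))) := by
  classical
  set f := Oᶜ.restrict ξ with hf
  set s : Set (Oᶜ : Set Ω) := f ⁻¹' A with hs
  have hiff : ∀ x : (Oᶜ : Set Ω), (ξ (x : Ω) ∈ A ↔ ξ (x : Ω) ∈ interior A) := by
    intro x
    have hx := hfr x x.2
    constructor
    · intro h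
      by_contra hi
      exact hx ⟨subset_closure h, hi⟩
    · exact fun h => interior_subset h
  have hiff' : ∀ x : (Oᶜ : Set Ω), (ξ (x : Ω) ∈ A ↔ ξ (x : Ω) ∈ closure A) := by
    intro x
    have hx := hfr x x.2
    constructor
    · exact fun h => subset_closure h
    · intro h
      by_contra hi
      have : ξ (x : Ω) ∉ interior A := fun hint => hi (interior_subset hint)
      exact hx ⟨h, this⟩
  have hopen : IsOpen s := by
    have : s = f ⁻¹' interior A := by
      ext x; exact hiff x
    rw [this]
    exact isOpen_interior.preimage hcont
  have hclosed : IsClosed s := by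
    have : s = f ⁻¹' closure A := by
      ext x; exact hiff' x
    rw [this]
    exact isClosed_closure.preimage hcont
  have heq : Oᶜ.restrict ({ω | ξ ω ∈ A}.indicator (fun _ => (1 : ℝ)))
      = s.indicator (fun _ => (1 : ℝ)) := by
    funext x
    by_cases hx : ξ (x : Ω) ∈ A
    · simp only [Set.restrict_apply, Set.restrict, Set.indicator_apply]
      rw [if_pos (show (x:Ω) ∈ {ω | ξ ω ∈ A} from hx), if_pos (show x ∈ s from hx)]
    · simp only [Set.restrict_apply, Set.restrict, Set.indicator_apply]
      rw [if_neg (show (x:Ω) ∉ {ω | ξ ω ∈ A} from hx), if_neg (show x ∉ s from hx)]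
  rw [heq]
  exact clopen_indicator ⟨hclosed, hopen⟩

/-- If `ξ` is quasi-continuous and `c({ξ ∈ ∂A}) = 0`, then the indicator
`1_{{ξ ∈ A}}` is quasi-continuous. -/
theorem stmt8 {Ω : Type*} [TopologicalSpace Ω] [PolishSpace Ω] (k : ℕ)
    (c : Set Ω → ℝ)
    (hc_nonneg : ∀ A : Set Ω, 0 ≤ c A)
    (hc_mono : ∀ A B : Set Ω, A ⊆ B → c A ≤ c B)
    (hc_subadd : ∀ A B : Set Ω, c (A ∪ B) ≤ c A + c B)
    -- continuity along decreasing sequences of closed sets (weak compactness of 𝒫)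
    (hc_closed : ∀ F : ℕ → Set Ω, (∀ i, IsClosed (F i)) → Antitone F →
      Filter.Tendsto (fun i => c (F i)) Filter.atTop (nhds (c (⋂ i, F i))))
    (ξ : Ω → EuclideanSpace ℝ (Fin k))
    -- quasi-continuity of ξ
    (hξ : ∀ ε > (0 : ℝ), ∃ O : Set Ω, IsOpen O ∧ c O < ε ∧ Continuous (Oᶜ.restrict ξ))
    (A : Set (EuclideanSpace ℝ (Fin k))) (hA : MeasurableSet A)
    (hbd : c {ω | ξ ω ∈ frontier A} = 0) :
    ∀ ε > (0 : ℝ), ∃ O : Set Ω, IsOpen O ∧ c O < ε ∧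
      Continuous (Oᶜ.restrict ({ω | ξ ω ∈ A}.indicator (fun _ => (1 : ℝ)))) := by
  intro ε hε
  obtain ⟨O₁, hO₁open, hO₁c, hO₁cont⟩ := hξ (ε / 2) (by linarith)
  by_cases hfr : (frontier A).Nonempty
  swap
  · -- frontier A empty: indicator already continuous on O₁ᶜ
    refine ⟨O₁, hO₁open, by linarith, ?_⟩
    refine key_restrict ξ A O₁ hO₁cont fun ω _ hω => ?_
    exact hfr ⟨_, hω⟩
  -- Define closed sets F i = O₁ᶜ ∩ {infDist (ξ ω) (frontier A) ≤ 1/(i+1)}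
  set g : (O₁ᶜ : Set Ω) → ℝ := fun x => infDist (ξ (x : Ω)) (frontier A) with hg
  have hgcont : Continuous g := (continuous_infDist_pt _).comp hO₁cont
  set F : ℕ → Set Ω := fun i => Subtype.val '' (g ⁻¹' Iic (1 / (i + 1 : ℝ))) with hF
  have hO₁cclosed : IsClosed (O₁ᶜ : Set Ω) := hO₁open.isClosed_compl
  have hFclosed : ∀ i, IsClosed (F i) := by
    intro i
    exact hO₁cclosed.isClosedEmbedding_subtypeVal.isClosedMap _
      ((isClosed_Iic).preimage hgcont)
  have hFanti : Antitone F := by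
    intro i j hij
    refine Set.image_mono fun x hx => ?_
    simp only [Set.mem_preimage, Set.mem_Iic] at hx ⊢
    refine le_trans hx ?_
    apply one_div_le_one_div_of_le
    · positivity
    · have : (i : ℝ) ≤ (j : ℝ) := (Nat.cast_le (α := ℝ)).mpr hij
      linarith
  have hFinter : (⋂ i, F i) ⊆ {ω | ξ ω ∈ frontier A} := by
    intro ω hω
    have hmem : ∀ i : ℕ, infDist (ξ ω) (frontier A) ≤ 1 / (i + 1 : ℝ) := by
      intro i
      obtain ⟨x, hx, rfl⟩ := Set.mem_iInter.mp hω i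
      exact hx
    have hzero : infDist (ξ ω) (frontier A) ≤ 0 := by
      refine le_of_forall_pos_le_add fun δ hδ => ?_
      obtain ⟨n, hn⟩ := exists_nat_one_div_lt hδ
      calc infDist (ξ ω) (frontier A) ≤ 1 / (n + 1 : ℝ) := hmem n
        _ ≤ δ := le_of_lt hn
        _ ≤ 0 + δ := by linarith
    have : infDist (ξ ω) (frontier A) = 0 := le_antisymm hzero (infDist_nonneg)
    exact (isClosed_frontier.mem_iff_infDist_zero hfr).mpr this
  have htend := hc_closed F hFclosed hFanti
  have hclim : c (⋂ i, F i) = 0 :=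
    le_antisymm (hbd ▸ hc_mono _ _ hFinter) (hc_nonneg _)
  rw [hclim] at htend
  have : ∀ᶠ i in atTop, c (F i) < ε / 2 :=
    htend.eventually (eventually_lt_nhds (by linarith : (0:ℝ) < ε / 2))
  obtain ⟨i, hi⟩ := this.exists
  -- open set V in Ω with V ∩ O₁ᶜ = {g < 1/(i+1)} ∩ O₁ᶜ
  have hGopen : IsOpen (g ⁻¹' Iio (1 / (i + 1 : ℝ))) := isOpen_Iio.preimage hgcont
  obtain ⟨V, hVopen, hVeq⟩ := isOpen_induced_iff.mp hGopen
  refine ⟨O₁ ∪ V, hO₁open.union hVopen, ?_, ?_⟩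
  · have hsub : O₁ ∪ V ⊆ O₁ ∪ F i := by
      intro ω hω
      rcases hω with hω | hω
      · exact Or.inl hω
      · by_cases hω1 : ω ∈ O₁
        · exact Or.inl hω1
        · refine Or.inr ?_
          have hx : (⟨ω, hω1⟩ : (O₁ᶜ : Set Ω)) ∈ Subtype.val ⁻¹' V := hω
          rw [hVeq] at hx
          simp only [Set.mem_preimage, Set.mem_Iio] at hx
          exact ⟨⟨ω, hω1⟩, Set.mem_preimage.mpr (Set.mem_Iic.mpr hx.le), rfl⟩
    calc c (O₁ ∪ V) ≤ c (O₁ ∪ F i) := hc_mono _ _ hsub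
      _ ≤ c O₁ + c (F i) := hc_subadd _ _
      _ < ε / 2 + ε / 2 := by linarith
      _ = ε := by ring
  · have hsubc : ((O₁ ∪ V)ᶜ : Set Ω) ⊆ O₁ᶜ := compl_subset_compl.mpr subset_union_left
    have hcont' : Continuous ((O₁ ∪ V)ᶜ.restrict ξ) := by
      have : (O₁ ∪ V)ᶜ.restrict ξ = (O₁ᶜ.restrict ξ) ∘ (Set.inclusion hsubc) := rfl
      rw [this]
      exact hO₁cont.comp (continuous_inclusion hsubc)
    refine key_restrict ξ A (O₁ ∪ V) hcont' fun ω hω hωfr => ?_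
    have hω1 : ω ∈ O₁ᶜ := hsubc hω
    have hωV : ω ∉ V := fun h => hω (Or.inr h)
    have hx : (⟨ω, hω1⟩ : (O₁ᶜ : Set Ω)) ∉ Subtype.val ⁻¹' V := hωV
    rw [hVeq] at hx
    simp only [Set.mem_preimage, Set.mem_Iio, not_lt] at hx
    have hzero : infDist (ξ ω) (frontier A) = 0 :=
      (isClosed_frontier.mem_iff_infDist_zero hfr).mp hωfr
    have hpos : (0:ℝ) < 1 / (i + 1 : ℝ) := by positivity
    rw [hg] at hx
    simp only at hx
    rw [hzero] at hx
    linarith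
end
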